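/- Let n, N, m be positive natural numbers. Let h_j : EuclideanSpace ℝ (Fin n) → ℝ (j = 1,…,m) be convex differentiable functions defining the feasible set C = {x : h_j(x) ≤ 0 for all j}, and suppose Slater's condition holds, i.e. there exists x̄ with h_j(x̄) < 0 for all j. For i = 1,…,N let f_i : EuclideanSpace ℝ (Fin n) → ℝ be concave, differentiable and nonnegative on C, and let g_i : EuclideanSpace ℝ (Fin n) → ℝ be convex, differentiable and strictly positive on C. If x* ∈ C maximizes the sum-of-ratios objective x ↦ Σ_{i=1}^N f_i(x)/g_i(x) over C, then there exist parameters μ*_i and β*_i (i = 1,…,N) such that x* also maximizes the parametric subtractive objective x ↦ Σ_{i=1}^N μ*_i (f_i(x) − β*_i g_i(x)) over C, and the parameters satisfy the system of equations β*_i · g_i(x*) − f_i(x*) = 0 and μ*_i · g_i(x*) − 1 = 0 for every i. -/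

import Mathlib

/-- Theorem 1 (generic form): transformation of a sum-of-ratios maximization over a
convex feasible set (defined by convex differentiable constraints satisfying Slater's
condition) into an equivalent parametric subtractive form. -/
theorem sum_of_ratios_parametric_transform
    (n N m : ℕ) (hn : 0 < n) (hN : 0 < N) (hm : 0 < m)
    (hc : Fin m → EuclideanSpace ℝ (Fin n) → ℝ)
    (hconv : ∀ j, ConvexOn ℝ Set.univ (hc j))
    (hdiff : ∀ j, Differentiable ℝ (hc j))
    (C : Set (EuclideanSpace ℝ (Fin n)))
    (hC : C = {x | ∀ j, hc j x ≤ 0})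
    (slater : ∃ xbar, ∀ j, hc j xbar < 0)
    (f g : Fin N → EuclideanSpace ℝ (Fin n) → ℝ)
    (hfconc : ∀ i, ConcaveOn ℝ C (f i))
    (hfdiff : ∀ i, Differentiable ℝ (f i))
    (hfnn : ∀ i, ∀ x ∈ C, 0 ≤ f i x)
    (hgconv : ∀ i, ConvexOn ℝ C (g i))
    (hgdiff : ∀ i, Differentiable ℝ (g i))
    (hgpos : ∀ i, ∀ x ∈ C, 0 < g i x)
    (xstar : EuclideanSpace ℝ (Fin n)) (hxstar : xstar ∈ C)
    (hmax : ∀ x ∈ C, (∑ i, f i x / g i x) ≤ ∑ i, f i xstar / g i xstar) :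
    ∃ μ β : Fin N → ℝ,
      (∀ x ∈ C, (∑ i, μ i * (f i x - β i * g i x)) ≤
        ∑ i, μ i * (f i xstar - β i * g i xstar)) ∧
      (∀ i, β i * g i xstar - f i xstar = 0 ∧ μ i * g i xstar - 1 = 0) := by
  -- C is convex
  have hCconv : Convex ℝ C := by
    have h1 : C = ⋂ j, {x | hc j x ≤ 0} := by
      rw [hC]; ext x; simp
    rw [h1]
    exact convex_iInter fun j => by simpa using (hconv j).convex_le 0
  have hg0 : ∀ i, g i xstar ≠ 0 := fun i => (hgpos i xstar hxstar).ne'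
  refine ⟨fun i => (g i xstar)⁻¹, fun i => f i xstar / g i xstar, ?_, fun i =>
    ⟨sub_eq_zero.mpr (div_mul_cancel₀ _ (hg0 i)), sub_eq_zero.mpr (inv_mul_cancel₀ (hg0 i))⟩⟩
  set μ : Fin N → ℝ := fun i => (g i xstar)⁻¹ with hμ
  set β : Fin N → ℝ := fun i => f i xstar / g i xstar with hβ
  intro x hx
  have hterm0 : ∀ i, μ i * (f i xstar - β i * g i xstar) = 0 := by
    intro i
    have : f i xstar - β i * g i xstar = 0 := by
      simp [hβ, div_mul_cancel₀ _ (hg0 i)]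
    simp [this]
  rw [Finset.sum_congr rfl (fun i _ => hterm0 i), Finset.sum_const_zero]
  by_contra hcon
  push_neg at hcon
  set S := ∑ i, μ i * (f i x - β i * g i x) with hS
  -- the segment from xstar to x
  set d : EuclideanSpace ℝ (Fin n) := x - xstar with hd
  set γ : ℝ → EuclideanSpace ℝ (Fin n) := fun t => xstar + t • d with hγ
  have hγ0 : γ 0 = xstar := by simp [hγ]
  have hγeq : ∀ t : ℝ, γ t = (1 - t) • xstar + t • x := by
    intro t; simp only [hγ, hd]; module
  have hmem : ∀ t ∈ Set.Icc (0:ℝ) 1, γ t ∈ C := by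
    intro t ht
    rw [hγeq]
    exact hCconv hxstar hx (by linarith [ht.2]) ht.1 (by ring)
  -- derivatives of the compositions
  have hγd : ∀ t : ℝ, HasDerivAt γ d t := by
    intro t
    simpa [hγ] using ((hasDerivAt_id t).smul_const d).const_add xstar
  set a : Fin N → ℝ := fun i => fderiv ℝ (f i) xstar d with ha
  set b : Fin N → ℝ := fun i => fderiv ℝ (g i) xstar d with hb
  have hfd : ∀ i, HasDerivAt (fun t => f i (γ t)) (a i) 0 := by
    intro i
    have h1 : HasFDerivAt (f i) (fderiv ℝ (f i) xstar) (γ 0) := by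
      rw [hγ0]; exact (hfdiff i xstar).hasFDerivAt
    exact h1.comp_hasDerivAt 0 (hγd 0)
  have hgd : ∀ i, HasDerivAt (fun t => g i (γ t)) (b i) 0 := by
    intro i
    have h1 : HasFDerivAt (g i) (fderiv ℝ (g i) xstar) (γ 0) := by
      rw [hγ0]; exact (hgdiff i xstar).hasFDerivAt
    exact h1.comp_hasDerivAt 0 (hγd 0)
  -- derivative of the ratio sum along the segment
  set ψ : ℝ → ℝ := fun t => ∑ i, f i (γ t) / g i (γ t) with hψdef
  set D : ℝ := ∑ i, (a i * g i xstar - f i xstar * b i) / (g i xstar) ^ 2 with hD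
  have hψ : HasDerivAt ψ D 0 := by
    apply HasDerivAt.fun_sum
    intro i _
    have := (hfd i).fun_div (hgd i) (by rw [hγ0]; exact hg0 i)
    simpa [hγ0] using this
  -- derivative of the parametric objective along the segment
  set χ : ℝ → ℝ := fun t => ∑ i, μ i * (f i (γ t) - β i * g i (γ t)) with hχdef
  set D' : ℝ := ∑ i, μ i * (a i - β i * b i) with hD'
  have hχ : HasDerivAt χ D' 0 := by
    apply HasDerivAt.fun_sum
    intro i _
    exact (((hfd i).sub ((hgd i).const_mul (β i))).const_mul (μ i))
  have hDD' : D' = D := by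
    apply Finset.sum_congr rfl
    intro i _
    simp only [hμ, hβ]
    field_simp [hg0 i]
  -- χ 0 = 0
  have hχ0 : χ 0 = 0 := by
    simp only [hχdef, hγ0]
    rw [Finset.sum_congr rfl (fun i _ => hterm0 i), Finset.sum_const_zero]
  -- concavity: χ t ≥ t * S on [0,1]
  have hχlb : ∀ t ∈ Set.Icc (0:ℝ) 1, t * S ≤ χ t := by
    intro t ht
    have h1t : (0:ℝ) ≤ 1 - t := by linarith [ht.2]
    have habt : (1 - t) + t = 1 := by ring
    rw [hS, Finset.mul_sum]
    apply Finset.sum_le_sum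
    intro i _
    have hμnn : 0 ≤ μ i := (inv_nonneg).mpr (hgpos i xstar hxstar).le
    have hβnn : 0 ≤ β i := div_nonneg (hfnn i xstar hxstar) (hgpos i xstar hxstar).le
    have hfin : (1 - t) * f i xstar + t * f i x ≤ f i (γ t) := by
      rw [hγeq]
      exact (hfconc i).2 hxstar hx h1t ht.1 habt
    have hgin : g i (γ t) ≤ (1 - t) * g i xstar + t * g i x := by
      rw [hγeq]
      exact (hgconv i).2 hxstar hx h1t ht.1 habt
    have hβg : f i xstar - β i * g i xstar = 0 := by
      simp [hβ, div_mul_cancel₀ _ (hg0 i)]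
    have key : t * (f i x - β i * g i x) ≤ f i (γ t) - β i * g i (γ t) := by
      nlinarith [mul_le_mul_of_nonneg_left hgin hβnn]
    calc t * (μ i * (f i x - β i * g i x)) = μ i * (t * (f i x - β i * g i x)) := by ring
      _ ≤ μ i * (f i (γ t) - β i * g i (γ t)) := mul_le_mul_of_nonneg_left key hμnn
  -- slope limits from the right
  have hmemIoc : Set.Ioc (0:ℝ) 1 ∈ nhdsWithin (0:ℝ) (Set.Ioi 0) :=
    Ioc_mem_nhdsGT one_pos
  have hmono : nhdsWithin (0:ℝ) (Set.Ioi 0) ≤ nhdsWithin (0:ℝ) {(0:ℝ)}ᶜ :=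
    nhdsWithin_mono 0 (fun t ht => ne_of_gt ht)
  -- D ≤ 0 from maximality of the ratio sum
  have hDle : D ≤ 0 := by
    have htend : Filter.Tendsto (slope ψ 0) (nhdsWithin 0 (Set.Ioi 0)) (nhds D) :=
      (hasDerivAt_iff_tendsto_slope.mp hψ).mono_left hmono
    refine le_of_tendsto htend ?_
    filter_upwards [hmemIoc] with t ht
    have hψt : ψ t ≤ ψ 0 := by
      have := hmax (γ t) (hmem t ⟨ht.1.le, ht.2⟩)
      simpa [hψdef, hγ0] using this
    rw [slope_def_field]
    apply div_nonpos_of_nonpos_of_nonneg (by linarith) (by linarith [ht.1])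
  -- S ≤ D' from the concavity lower bound
  have hSle : S ≤ D' := by
    have htend : Filter.Tendsto (slope χ 0) (nhdsWithin 0 (Set.Ioi 0)) (nhds D') :=
      (hasDerivAt_iff_tendsto_slope.mp hχ).mono_left hmono
    refine ge_of_tendsto htend ?_
    filter_upwards [hmemIoc] with t ht
    rw [slope_def_field, hχ0]
    rw [le_div_iff₀ (by linarith [ht.1] : (0:ℝ) < t - 0)]
    have := hχlb t ⟨ht.1.le, ht.2⟩
    linarith
  linarith [hcon, hSle, hDD' ▸ hSle]
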